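/- Let P be a finite graded poset of rank r, let g be a positive labeling of P, and let a₀, …, a_r be positive reals. Then BAR((a₀, a₁, …, a_r) ♭ g) = (1/(a₀a₁⋯a_r), a₀, a₁, …, a_{r-2}, a_{r-1}) ♭ BAR(g). -/

import Mathlib

/-!
Birational (commutative) antichain/order rowmotion on a finite poset `P`, with labels in `ℝ`
and positive labelings, following Joseph–Roby, "Birational and noncommutative lifts of
antichain toggling and rowmotion".
-/

open Finset

attribute [local instance] Classical.propDecidable

variable {P : Type*} [Fintype P] [PartialOrder P]

/-- `c` is a saturated chain in `P`: consecutive entries are covers. -/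
def SatChain {P : Type*} [PartialOrder P] {k : ℕ} (c : Fin (k + 1) → P) : Prop :=
  ∀ i : Fin k, c i.castSucc ⋖ c i.succ

/-- `c` is a maximal chain of `P`: a saturated chain from a minimal element to a maximal
element of `P` (equivalently, the restriction to `P` of a maximal chain
`0̂ ⋖ y₁ ⋖ ⋯ ⋖ y_k ⋖ 1̂` of `P̂`). -/
def MaxChain {P : Type*} [PartialOrder P] {k : ℕ} (c : Fin (k + 1) → P) : Prop :=
  SatChain c ∧ IsMin (c 0) ∧ IsMax (c (Fin.last k))

/-- `Υ_v(g)`: the sum over all maximal chains `(y₁, …, y_k)` of `P` through `v` of the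
products `g(y₁)⋯g(y_k)` of the labels along the chain. -/
noncomputable def Upsilon (g : P → ℝ) (v : P) : ℝ :=
  ∑ k ∈ range (Fintype.card P),
    ∑ c ∈ univ.filter (fun c : Fin (k + 1) → P => MaxChain c ∧ ∃ j, c j = v),
      (List.ofFn (g ∘ c)).prod

/-- The birational antichain toggle `τ_v`: it replaces the label at `v` by `C / Υ_v(g)` and
fixes all other labels. -/
noncomputable def atog (C : ℝ) (v : P) (g : P → ℝ) : P → ℝ :=
  fun x => if x = v then C / Upsilon g v else g x

/-- `∑_{y ∈ P̂, y ⋖ x} f(y)`, with the convention `f(0̂) = 1` (the unique lower cover in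
`P̂` of a minimal element of `P` is `0̂`). -/
noncomputable def lowSum (f : P → ℝ) (x : P) : ℝ :=
  (if IsMin x then 1 else 0) + ∑ y ∈ univ.filter (fun y => y ⋖ x), f y

/-- `∑_{y ∈ P̂, y ⋗ x} 1/f(y)`, with the convention `f(1̂) = C`. -/
noncomputable def upInvSum (C : ℝ) (f : P → ℝ) (x : P) : ℝ :=
  (if IsMax x then 1 / C else 0) + ∑ y ∈ univ.filter (fun y => x ⋖ y), 1 / f y

/-- The birational order toggle `T_v`: it replaces the label at `v` by
`(∑_{y ∈ P̂, y ⋖ v} f(y)) / (f(v) · ∑_{y ∈ P̂, y ⋗ v} 1/f(y))` (with `f(0̂) = 1`,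
`f(1̂) = C`) and fixes all other labels. -/
noncomputable def otog (C : ℝ) (v : P) (f : P → ℝ) : P → ℝ :=
  fun x => if x = v then lowSum f v / (f v * upInvSum C f v) else f x

/-- The birational complement map `Θ`: `(Θf)(x) = C / f(x)`. -/
noncomputable def thetaMap (C : ℝ) (f : P → ℝ) : P → ℝ := fun x => C / f x

/-- The birational down transfer `∇`: `(∇f)(x) = f(x) / ∑_{y ∈ P̂, y ⋖ x} f(y)` with
`f(0̂) = 1`. -/
noncomputable def nablaMap (f : P → ℝ) : P → ℝ := fun x => f x / lowSum f x

/-- The birational inverse up transfer `Δ⁻¹`: `(Δ⁻¹f)(x)` is the sum, over all saturated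
chains `x = y₁ ⋖ y₂ ⋖ ⋯ ⋖ y_k ⋖ 1̂` in `P̂` (i.e. saturated chains of `P` starting at `x`
and ending at a maximal element of `P`), of `f(y₁)f(y₂)⋯f(y_k)`. -/
noncomputable def deltaInvMap (f : P → ℝ) : P → ℝ := fun x =>
  ∑ k ∈ range (Fintype.card P),
    ∑ c ∈ univ.filter (fun c : Fin (k + 1) → P =>
        SatChain c ∧ c 0 = x ∧ IsMax (c (Fin.last k))),
      (List.ofFn (f ∘ c)).prod

/-- `l` is a linear extension of `P`: it lists every element of `P` exactly once, and
`l[i] < l[j]` in `P` implies `i < j`. -/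
def IsLinearExtension {P : Type*} [PartialOrder P] (l : List P) : Prop :=
  l.Nodup ∧ (∀ x : P, x ∈ l) ∧
    ∀ (i j : ℕ) (hi : i < l.length) (hj : j < l.length), l[i]'hi < l[j]'hj → i < j

/-- `l` is a linear extension of the subposet `A` of `P`. -/
def IsLinearExtensionOn {P : Type*} [PartialOrder P] (A : Set P) (l : List P) : Prop :=
  l.Nodup ∧ (∀ x : P, x ∈ l ↔ x ∈ A) ∧
    ∀ (i j : ℕ) (hi : i < l.length) (hj : j < l.length), l[i]'hi < l[j]'hj → i < j

/-- Apply the antichain toggles `τ` along the list `l`, first element of `l` first; for a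
linear extension `l = (x₁,…,xₙ)` this is `τ_{xₙ} ∘ ⋯ ∘ τ_{x₂} ∘ τ_{x₁}`, i.e. birational
antichain rowmotion `BAR`. -/
noncomputable def applyATogs (C : ℝ) (l : List P) (g : P → ℝ) : P → ℝ :=
  l.foldl (fun h v => atog C v h) g

/-- Apply the order toggles `T` along the list `l`, first element of `l` first. -/
noncomputable def applyOTogs (C : ℝ) (l : List P) (f : P → ℝ) : P → ℝ :=
  l.foldl (fun h v => otog C v h) f

/-- `rk` is a rank function exhibiting `P` as a graded poset of rank `r`: minimal elements
have rank `0`, ranks increase by `1` along covers, and maximal elements have rank `r`. -/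
def IsRankFunction {P : Type*} [PartialOrder P] (rk : P → ℕ) (r : ℕ) : Prop :=
  (∀ x : P, IsMin x → rk x = 0) ∧ (∀ x y : P, x ⋖ y → rk y = rk x + 1) ∧
    (∀ x : P, IsMax x → rk x = r)


namespace BARAux

variable {P : Type*} [Fintype P] [PartialOrder P]

noncomputable def bcoef (a : ℕ → ℝ) (r : ℕ) : ℕ → ℝ :=
  fun j => if j = 0 then (∏ i ∈ range (r + 1), a i)⁻¹ else a (j - 1)

lemma bcoef_pos {a : ℕ → ℝ} (ha : ∀ j, 0 < a j) (r j : ℕ) : 0 < bcoef a r j := by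
  unfold bcoef
  split
  · exact inv_pos.mpr (Finset.prod_pos fun i _ => ha i)
  · exact ha _

lemma coef_eq {a : ℕ → ℝ} (ha : ∀ j, 0 < a j) (r : ℕ) :
    ∀ i, i ≤ r →
      (∏ j ∈ range (r + 1), if j < i then bcoef a r j else a j) = (bcoef a r i)⁻¹ := by
  intro i
  induction i with
  | zero =>
    intro _
    simp [bcoef]
  | succ i ih =>
    intro hir
    have hi : i ≤ r := Nat.le_of_succ_le hir
    have hmem : i ∈ range (r + 1) := mem_range.mpr (Nat.lt_succ_of_le hi)
    have h1 := Finset.mul_prod_erase (range (r + 1))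
      (fun j => if j < i then bcoef a r j else a j) hmem
    have h2 := Finset.mul_prod_erase (range (r + 1))
      (fun j => if j < i + 1 then bcoef a r j else a j) hmem
    have hE : (∏ j ∈ (range (r + 1)).erase i, if j < i + 1 then bcoef a r j else a j)
        = ∏ j ∈ (range (r + 1)).erase i, if j < i then bcoef a r j else a j := by
      refine Finset.prod_congr rfl fun j hj => ?_
      have hji : j ≠ i := Finset.ne_of_mem_erase hj
      have hiff : j < i + 1 ↔ j < i := by omega
      simp [hiff]
    have hai : a i ≠ 0 := ne_of_gt (ha i)
    have hbi : bcoef a r i ≠ 0 := ne_of_gt (bcoef_pos ha r i)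
    have hb1 : bcoef a r (i + 1) = a i := by simp [bcoef]
    have heq : a i * (∏ j ∈ (range (r + 1)).erase i, if j < i then bcoef a r j else a j)
        = (bcoef a r i)⁻¹ := by
      have := h1.trans (ih hi)
      simpa using this
    rw [← h2, hE, hb1]
    simp only [Nat.lt_succ_of_le (le_refl i), if_pos]
    field_simp at heq ⊢
    linear_combination heq

lemma satChain_strictMono {k : ℕ} {c : Fin (k + 1) → P} (hc : SatChain c) :
    StrictMono c :=
  Fin.strictMono_iff_lt_succ.mpr fun i => (hc i).lt

lemma satChain_rk {rk : P → ℕ} {r : ℕ} (hrk : IsRankFunction rk r) {k : ℕ}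
    {c : Fin (k + 1) → P} (hc : SatChain c) (h0 : IsMin (c 0)) (j : Fin (k + 1)) :
    rk (c j) = j.val := by
  induction j using Fin.induction with
  | zero => simpa using hrk.1 _ h0
  | succ i ih =>
    have h := hrk.2.1 _ _ (hc i)
    rw [h, ih]
    simp

lemma upsilon_scale {rk : P → ℕ} {r : ℕ} (hrk : IsRankFunction rk r)
    {a : ℕ → ℝ} (l₁ : List P) (v : P)
    (hA : ∀ y, y < v → y ∈ l₁) (hB : v ∉ l₁) (hC2 : ∀ y, v < y → y ∉ l₁)
    (f : P → ℝ) :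
    Upsilon (fun x => (if x ∈ l₁ then bcoef a r (rk x) else a (rk x)) * f x) v
      = (∏ j ∈ range (r + 1), if j < rk v then bcoef a r j else a j) * Upsilon f v := by
  unfold Upsilon
  rw [Finset.mul_sum]
  refine Finset.sum_congr rfl fun k _ => ?_
  rw [Finset.mul_sum]
  refine Finset.sum_congr rfl fun c hc => ?_
  rw [Finset.mem_filter] at hc
  obtain ⟨-, ⟨hsat, hmin, hmax⟩, j, hj⟩ := hc
  have hrkc : ∀ i : Fin (k + 1), rk (c i) = i.val := satChain_rk hrk hsat hmin
  have hkr : r = k := by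
    have h1 := hrkc (Fin.last k)
    rw [hrk.2.2 _ hmax] at h1
    simpa using h1
  subst hkr
  have hjv : rk v = j.val := by rw [← hj]; exact hrkc j
  have hmono := satChain_strictMono hsat
  simp only [Function.comp, List.prod_ofFn]
  rw [← Fin.prod_univ_eq_prod_range (fun j => if j < rk v then bcoef a r j else a j),
    ← Finset.prod_mul_distrib]
  refine Finset.prod_congr rfl fun i _ => ?_
  have hri := hrkc i
  rcases lt_trichotomy (i : ℕ) (rk v) with h | h | h
  · have hij : i < j := by rw [Fin.lt_def]; omega
    have hlt : c i < v := lt_of_lt_of_eq (hmono hij) hj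
    rw [if_pos (hA _ hlt), if_pos h, hri]
  · have hij : i = j := Fin.ext (by omega)
    have hciv : c i = v := by rw [hij, hj]
    have hnot : c i ∉ l₁ := by rw [hciv]; exact hB
    rw [if_neg hnot, if_neg (by omega), hri]
  · have hij : j < i := by rw [Fin.lt_def]; omega
    have hlt : v < c i := lt_of_eq_of_lt hj.symm (hmono hij)
    rw [if_neg (hC2 _ hlt), if_neg (by omega), hri]

lemma atog_scale (C : ℝ) {rk : P → ℕ} {r : ℕ} (hrk : IsRankFunction rk r)
    {a : ℕ → ℝ} (ha : ∀ j, 0 < a j) (l₁ : List P) (v : P)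
    (hA : ∀ y, y < v → y ∈ l₁) (hB : v ∉ l₁) (hC2 : ∀ y, v < y → y ∉ l₁)
    (f : P → ℝ) :
    atog C v (fun x => (if x ∈ l₁ then bcoef a r (rk x) else a (rk x)) * f x)
      = fun x => (if x ∈ l₁ ++ [v] then bcoef a r (rk x) else a (rk x)) * atog C v f x := by
  funext x
  simp only [atog]
  by_cases hx : x = v
  · rw [if_pos hx, if_pos hx, if_pos (show x ∈ l₁ ++ [v] by simp [hx])]
    subst hx
    rw [upsilon_scale hrk l₁ x hA hB hC2 f]
    by_cases hr : rk x ≤ r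
    · rw [coef_eq ha r _ hr, div_eq_mul_inv, div_eq_mul_inv, mul_inv, inv_inv]
      ring
    · have hz : Upsilon f x = 0 := by
        unfold Upsilon
        refine Finset.sum_eq_zero fun k _ => Finset.sum_eq_zero fun c hc => ?_
        exfalso
        rw [Finset.mem_filter] at hc
        obtain ⟨-, ⟨hsat, hmin, hmax⟩, j, hj⟩ := hc
        have hrkc := satChain_rk hrk hsat hmin
        have h1 := hrkc (Fin.last k)
        rw [hrk.2.2 _ hmax] at h1
        simp at h1
        have h3 : rk x = j.val := by rw [← hj]; exact hrkc j
        have h4 := j.isLt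
        omega
      rw [hz]
      simp
  · rw [if_neg hx, if_neg hx]
    have hiff : (x ∈ l₁ ++ [v]) ↔ (x ∈ l₁) := by simp [hx]
    rw [if_congr hiff rfl rfl]

lemma applyATogs_scale (C : ℝ) {rk : P → ℕ} {r : ℕ} (hrk : IsRankFunction rk r)
    {a : ℕ → ℝ} (ha : ∀ j, 0 < a j) :
    ∀ (l₂ l₁ : List P), IsLinearExtension (l₁ ++ l₂) → ∀ f : P → ℝ,
      applyATogs C l₂ (fun x => (if x ∈ l₁ then bcoef a r (rk x) else a (rk x)) * f x)
        = fun x => (if x ∈ l₁ ++ l₂ then bcoef a r (rk x) else a (rk x))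
            * applyATogs C l₂ f x := by
  intro l₂
  induction l₂ with
  | nil => intro l₁ _ f; simp [applyATogs]
  | cons v t ih =>
    intro l₁ hle f
    have hvB : v ∉ l₁ := by
      have hnd := hle.1
      rw [List.nodup_append] at hnd
      exact fun hv => hnd.2.2 v hv v (by simp) rfl
    have hn : l₁.length < (l₁ ++ v :: t).length := by simp
    have hvL : (l₁ ++ v :: t)[l₁.length]'hn = v := by
      rw [List.getElem_append_right (le_refl _)]
      simp
    have hA : ∀ y, y < v → y ∈ l₁ := by
      intro y hy
      obtain ⟨i, hi, hiy⟩ := List.getElem_of_mem (hle.2.1 y)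
      have hlt : i < l₁.length :=
        hle.2.2 i l₁.length hi hn (by rw [hiy, hvL]; exact hy)
      have hgy : (l₁ ++ v :: t)[i]'hi = l₁[i]'hlt := List.getElem_append_left hlt
      rw [← hiy, hgy]
      exact List.getElem_mem _
    have hC2 : ∀ y, v < y → y ∉ l₁ := by
      intro y hy hyl
      obtain ⟨i, hi, hiy⟩ := List.getElem_of_mem hyl
      have hiL : i < (l₁ ++ v :: t).length := by simp; omega
      have hgy : (l₁ ++ v :: t)[i]'hiL = y := by
        rw [List.getElem_append_left hi]; exact hiy
      have := hle.2.2 l₁.length i hn hiL (by rw [hvL, hgy]; exact hy)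
      omega
    have hfold : ∀ g : P → ℝ, applyATogs C (v :: t) g = applyATogs C t (atog C v g) := by
      intro g; simp [applyATogs]
    rw [hfold, hfold, atog_scale C hrk ha l₁ v hA hvB hC2 f]
    have hle' : IsLinearExtension ((l₁ ++ [v]) ++ t) := by
      rw [List.append_assoc]; simpa using hle
    rw [ih (l₁ ++ [v]) hle' (atog C v f)]
    funext x
    simp [List.append_assoc]

end BARAux

/-- Let `P` be a finite graded poset of rank `r`, `g` a positive
labeling and `a₀,…,a_r` positive reals.  Then
`BAR((a₀, a₁, …, a_r) ♭ g) = (1/(a₀a₁⋯a_r), a₀, a₁, …, a_{r-2}, a_{r-1}) ♭ BAR(g)`,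
where `(a₀,…,a_r) ♭ g` multiplies the label of each element of rank `j` by `a_j`, and
`BAR = τ_{xₙ} ∘ ⋯ ∘ τ_{x₂} ∘ τ_{x₁}` for any linear extension `(x₁,…,xₙ)` of `P`. -/
theorem BAR_graded_rescaling (C : ℝ) (hC : 0 < C)
    (rk : P → ℕ) (r : ℕ) (hrk : IsRankFunction rk r)
    (l : List P) (hl : IsLinearExtension l)
    (a : ℕ → ℝ) (ha : ∀ j, 0 < a j)
    (g : P → ℝ) (hg : ∀ x, 0 < g x) :
    applyATogs C l (fun x => a (rk x) * g x)
      = fun x =>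
          (if rk x = 0 then (∏ j ∈ range (r + 1), a j)⁻¹ else a (rk x - 1))
            * applyATogs C l g x := by
  have h := BARAux.applyATogs_scale C hrk ha l ([] : List P) (by simpa using hl) g
  have h0 : (fun x => (if x ∈ ([] : List P) then BARAux.bcoef a r (rk x) else a (rk x)) * g x)
      = fun x => a (rk x) * g x := by
    funext x; simp
  rw [h0] at h
  rw [h]
  funext x
  have : x ∈ ([] : List P) ++ l := by simpa using hl.2.1 x
  rw [if_pos this]
  rfl
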